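/- For k, ℓ ∈ ℤ_{≥0}, the coefficient-wise identity Cay_m(2k−ℓ; ℓ) = (−1)^m · m! · K_m(k; ℓ) holds for all 0 ≤ m ≤ ℓ, where Cay is the Cayley continuant and K the binary Krawtchouk polynomial. -/

import Mathlib

open Finset

/-- Falling factorial `r(r-1)⋯(r-j+1)`. -/
noncomputable def fallFac (r : ℂ) (j : ℕ) : ℂ := (descPochhammer ℂ j).eval r

/-- Rising factorial `r(r+1)⋯(r+j-1)`. -/
noncomputable def riseFac (r : ℂ) (j : ℕ) : ℂ := (ascPochhammer ℂ j).eval r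

/-- Generalized binomial coefficient. -/
noncomputable def gchoose (a : ℂ) (k : ℕ) : ℂ := fallFac a k / (k.factorial : ℂ)

/-- Cayley continuant `Cay_m(x;y)`. -/
noncomputable def Cay (m : ℕ) (x y : ℂ) : ℂ :=
  ∑ j ∈ range (m + 1),
    (m.choose j : ℂ) * fallFac ((x + y) / 2) j * riseFac ((x - y) / 2) (m - j)

/-- Binary Krawtchouk polynomial. -/
noncomputable def Kraw (m : ℕ) (x y : ℂ) : ℂ :=
  ∑ j ∈ range (m + 1), (-1 : ℂ) ^ j * gchoose x j * gchoose (y - x) (m - j)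

/-- For `0 ≤ m ≤ ℓ`, `Cay_m(2k−ℓ; ℓ) = (−1)^m m! K_m(k; ℓ)`. -/
theorem cayley_eq_krawtchouk' (k ℓ m : ℕ) (h : m ≤ ℓ) :
    Cay m (2 * (k : ℂ) - ℓ) (ℓ : ℂ) =
      (-1 : ℂ) ^ m * (m.factorial : ℂ) * Kraw m (k : ℂ) (ℓ : ℂ) := by
  unfold Cay Kraw gchoose
  rw [mul_sum]
  refine Finset.sum_congr rfl fun j hj => ?_
  rw [mem_range, Nat.lt_succ_iff] at hj
  have h1 : (2 * (k : ℂ) - ℓ + ℓ) / 2 = (k : ℂ) := by ring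
  have h2 : (2 * (k : ℂ) - ℓ - ℓ) / 2 = -((ℓ : ℂ) - k) := by ring
  rw [h1, h2]
  have h3 : riseFac (-((ℓ : ℂ) - k)) (m - j) = (-1)^(m-j) * fallFac ((ℓ:ℂ) - (k:ℂ)) (m - j) :=
    by unfold riseFac fallFac; exact ascPochhammer_eval_neg_eq_descPochhammer ℂ ((ℓ:ℂ) - (k:ℂ)) _
  rw [h3]
  have hc : (m.choose j : ℂ) = (m.factorial : ℂ) / (j.factorial * (m - j).factorial) := by
    rw [Nat.choose_eq_factorial_div_factorial hj]
    rw [Nat.cast_div (Nat.factorial_mul_factorial_dvd_factorial hj)]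
    · push_cast; ring
    · exact_mod_cast Nat.cast_ne_zero.2 (Nat.mul_ne_zero j.factorial_ne_zero (m-j).factorial_ne_zero)
  rw [hc]
  have hm : (-1:ℂ)^(m-j) = (-1)^m * (-1)^j := by
    rw [pow_sub₀ (-1:ℂ) (by norm_num) hj]
    simp [← inv_pow, inv_neg]
  rw [hm]
  have hj0 : (j.factorial : ℂ) ≠ 0 := Nat.cast_ne_zero.2 j.factorial_ne_zero
  have hj1 : ((m-j).factorial : ℂ) ≠ 0 := Nat.cast_ne_zero.2 (m-j).factorial_ne_zero
  field_simp
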